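/- For p ∈ X^#, the closure of p̆ = {q ∈ X^# : q ∥ p} is a minimal nonempty closed invariant subset of X^# if and only if for every P ∈ p there exists r ≥ 0 such that p̆ ⊆ (B(P,r))^#, i.e., every ultrafilter parallel to p contains B(P,r). -/
import Mathlib


open Metric Bornology Set

variable {X : Type*} [MetricSpace X]

/-- `B(A,r) = ⋃_{a∈A} B(a,r)` where `B(a,r)` is the closed ball of radius `r`. -/
def ballU (A : Set X) (r : ℝ) : Set X := ⋃ a ∈ A, Metric.closedBall a r

/-- `X^#`: the set of ultrafilters on `X` all of whose members are unbounded. -/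
def sharp (X : Type*) [MetricSpace X] : Set (Ultrafilter X) :=
  {p | ∀ P ∈ p, ¬ Bornology.IsBounded P}

/-- Parallelity: `p ∥ q` iff there is `r ≥ 0` with `B(Q,r) ∈ p` for every `Q ∈ q`. -/
def Par (p q : Ultrafilter X) : Prop :=
  ∃ r : ℝ, 0 ≤ r ∧ ∀ Q ∈ q, ballU Q r ∈ p

/-- `p̆ = {q ∈ X^# : q ∥ p}`. -/
def pbreve (p : Ultrafilter X) : Set (Ultrafilter X) :=
  {q | q ∈ sharp X ∧ Par q p}

/-- The `p`-companion `Δ_p(Y) = {q ∈ X^# : Y ∈ q, q ∥ p}`. -/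
def Delta (p : Ultrafilter X) (Y : Set X) : Set (Ultrafilter X) :=
  {q | q ∈ sharp X ∧ Y ∈ q ∧ Par q p}

/-- A set `S ⊆ X^#` is invariant if `p ∈ S`, `q ∈ X^#`, `q ∥ p` imply `q ∈ S`. -/
def Invt (S : Set (Ultrafilter X)) : Prop :=
  ∀ p ∈ S, ∀ q, q ∈ sharp X → Par q p → q ∈ S

/-- `Y` is large if `X = B(Y,r)` for some `r ≥ 0`. -/
def Large (Y : Set X) : Prop := ∃ r : ℝ, 0 ≤ r ∧ ballU Y r = Set.univ

/-- `Y` is thick if for every `r ≥ 0` there is `y ∈ Y` with `B(y,r) ⊆ Y`. -/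
def Thick (Y : Set X) : Prop := ∀ r : ℝ, 0 ≤ r → ∃ y ∈ Y, Metric.closedBall y r ⊆ Y

/-- `Y` is prethick if `B(Y,r)` is thick for some `r ≥ 0`. -/
def Prethick (Y : Set X) : Prop := ∃ r : ℝ, 0 ≤ r ∧ Thick (ballU Y r)

/-- `Y` is small if `(X∖Y) ∩ L` is large for every large `L`. -/
def SmallSet (Y : Set X) : Prop := ∀ L : Set X, Large L → Large (Yᶜ ∩ L)

/-- `Y` is thin if for each `r ≥ 0` there is a bounded `V` with
`B(y,r) ∩ Y = {y}` for all `y ∈ Y∖V`. -/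
def Thin (Y : Set X) : Prop :=
  ∀ r : ℝ, 0 ≤ r → ∃ V : Set X, Bornology.IsBounded V ∧
    ∀ y ∈ Y \ V, Metric.closedBall y r ∩ Y = {y}

/-- `Y` is `n`-thin if for each `r ≥ 0` there is a bounded `V` with
`|B(y,r) ∩ Y| ≤ n` for all `y ∈ Y∖V`. -/
def NThin (n : ℕ) (Y : Set X) : Prop :=
  ∀ r : ℝ, 0 ≤ r → ∃ V : Set X, Bornology.IsBounded V ∧
    ∀ y ∈ Y \ V, (Metric.closedBall y r ∩ Y).encard ≤ n

/-- `M` is a minimal nonempty closed invariant subset of `X^#`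
(closures/closedness taken in the Stone topology on ultrafilters). -/
def MinCI (M : Set (Ultrafilter X)) : Prop :=
  M ⊆ sharp X ∧ M.Nonempty ∧ IsClosed M ∧ Invt M ∧
    ∀ S ⊆ M, S.Nonempty → IsClosed S → Invt S → S = M

/-! ### Auxiliary lemmas -/

lemma mem_ballU {A : Set X} {r : ℝ} {x : X} : x ∈ ballU A r ↔ ∃ a ∈ A, dist x a ≤ r := by
  simp [ballU, Metric.mem_closedBall]

lemma subset_ballU {A : Set X} {r : ℝ} (hr : 0 ≤ r) : A ⊆ ballU A r := fun x hx =>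
  mem_ballU.mpr ⟨x, hx, by simpa using hr⟩

lemma ballU_mono {A B : Set X} {r s : ℝ} (hAB : A ⊆ B) (hrs : r ≤ s) :
    ballU A r ⊆ ballU B s := fun x hx => by
  obtain ⟨a, ha, hd⟩ := mem_ballU.mp hx
  exact mem_ballU.mpr ⟨a, hAB ha, hd.trans hrs⟩

lemma ballU_ballU {A : Set X} {r s : ℝ} : ballU (ballU A r) s ⊆ ballU A (s + r) := by
  intro x hx
  obtain ⟨b, hb, hd1⟩ := mem_ballU.mp hx
  obtain ⟨a, ha, hd2⟩ := mem_ballU.mp hb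
  exact mem_ballU.mpr ⟨a, ha, (dist_triangle x b a).trans (add_le_add hd1 hd2)⟩

lemma isBounded_ballU {A : Set X} {r : ℝ} (h : Bornology.IsBounded A) :
    Bornology.IsBounded (ballU A r) := by
  rcases isEmpty_or_nonempty X with hX | ⟨⟨c⟩⟩
  · haveI := hX
    have he : ballU A r = (∅ : Set X) := Set.eq_empty_of_isEmpty _
    rw [he]; exact Bornology.isBounded_empty
  · obtain ⟨R, hR⟩ := h.subset_closedBall c
    refine (Metric.isBounded_closedBall (x := c) (r := R + r)).subset fun x hx => ?_
    obtain ⟨a, ha, hd⟩ := mem_ballU.mp hx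
    have := hR ha
    rw [Metric.mem_closedBall] at this ⊢
    calc dist x c ≤ dist x a + dist a c := dist_triangle _ _ _
      _ ≤ r + R := add_le_add hd this
      _ = R + r := add_comm _ _

lemma par_refl (q : Ultrafilter X) : Par q q :=
  ⟨0, le_refl 0, fun Q hQ => Filter.mem_of_superset hQ (subset_ballU le_rfl)⟩

/-- Symmetry of parallelity, with an explicit radius. -/
lemma par_symm_rad {p q : Ultrafilter X} {r : ℝ} (h : ∀ Q ∈ q, ballU Q r ∈ p) :
    ∀ P ∈ p, ballU P r ∈ q := by
  intro P hP
  by_contra hc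
  have hC : (ballU P r)ᶜ ∈ q := Ultrafilter.compl_mem_iff_notMem.mpr hc
  have h1 : ballU ((ballU P r)ᶜ) r ∈ p := h _ hC
  have h2 : (ballU ((ballU P r)ᶜ) r ∩ P : Set X) = ∅ := by
    ext x
    simp only [Set.mem_inter_iff, Set.mem_empty_iff_false, iff_false, not_and]
    intro hx hxP
    obtain ⟨a, ha, hd⟩ := mem_ballU.mp hx
    exact ha (mem_ballU.mpr ⟨x, hxP, by rwa [dist_comm]⟩)
  have := Filter.nonempty_of_mem (Filter.inter_mem h1 hP)
  rw [h2] at this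
  exact Set.not_nonempty_empty this

lemma par_symm {p q : Ultrafilter X} (h : Par p q) : Par q p := by
  obtain ⟨r, hr, hpar⟩ := h
  exact ⟨r, hr, par_symm_rad hpar⟩

lemma par_trans {p q s : Ultrafilter X} (h1 : Par p q) (h2 : Par q s) : Par p s := by
  obtain ⟨r, hr, hpar⟩ := h1
  obtain ⟨r', hr', hpar'⟩ := h2
  refine ⟨r + r', add_nonneg hr hr', fun S hS => ?_⟩
  have := hpar _ (hpar' S hS)
  exact Filter.mem_of_superset this (ballU_ballU.trans (ballU_mono subset_rfl (by linarith)))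

lemma sharp_of_par {p q : Ultrafilter X} (h : Par q p) (hp : p ∈ sharp X) : q ∈ sharp X := by
  obtain ⟨r, hr, hpar⟩ := par_symm h
  intro Q hQ hbdd
  exact hp _ (hpar Q hQ) (isBounded_ballU hbdd)

lemma sharp_isClosed : IsClosed (sharp X) := by
  have : sharp X = ⋂ (B : Set X), ⋂ (_ : Bornology.IsBounded B), {q : Ultrafilter X | Bᶜ ∈ q} := by
    ext q
    simp only [Set.mem_iInter, Set.mem_setOf_eq, sharp]
    constructor
    · intro h B hB
      exact Ultrafilter.compl_mem_iff_notMem.mpr fun hBq => h B hBq hB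
    · intro h P hP hbdd
      exact (Ultrafilter.compl_mem_iff_notMem.mp (h P hbdd)) hP
  rw [this]
  exact isClosed_iInter fun B => isClosed_iInter fun _ => ultrafilter_isClosed_basic _

lemma mem_closure_ultra {S : Set (Ultrafilter X)} {u : Ultrafilter X} :
    u ∈ closure S ↔ ∀ A ∈ u, ∃ v ∈ S, A ∈ v := by
  rw [ultrafilterBasis_is_basis.mem_closure_iff]
  constructor
  · intro h A hA
    obtain ⟨v, hv⟩ := h {w | A ∈ w} ⟨A, rfl⟩ hA
    exact ⟨v, hv.2, hv.1⟩
  · rintro h o ⟨A, rfl⟩ hu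
    obtain ⟨v, hvS, hvA⟩ := h A hu
    exact ⟨v, hvA, hvS⟩

/-- Given `B(A,r) ∈ q`, there is an ultrafilter `v ∋ A` parallel to `q` with radius `r`. -/
lemma exists_par_of_ballU_mem {q : Ultrafilter X} {A : Set X} {r : ℝ}
    (h : ballU A r ∈ q) : ∃ v : Ultrafilter X, A ∈ v ∧ ∀ Q ∈ q, ballU Q r ∈ v := by
  obtain ⟨x₀, hx₀⟩ := Filter.nonempty_of_mem h
  obtain ⟨a₀, ha₀, -⟩ := mem_ballU.mp hx₀
  classical
  let f : X → X := fun x => if hx : x ∈ ballU A r then (mem_ballU.mp hx).choose else a₀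
  have hfA : ∀ x, f x ∈ A := by
    intro x
    by_cases hx : x ∈ ballU A r
    · simp only [f, dif_pos hx]
      exact (mem_ballU.mp hx).choose_spec.1
    · simp only [f, dif_neg hx]; exact ha₀
  have hfd : ∀ x ∈ ballU A r, dist x (f x) ≤ r := by
    intro x hx
    simp only [f, dif_pos hx]
    exact (mem_ballU.mp hx).choose_spec.2
  refine ⟨Ultrafilter.map f q, ?_, ?_⟩
  · rw [Ultrafilter.mem_map]
    exact Filter.univ_mem' fun x => hfA x
  · intro Q hQ
    rw [Ultrafilter.mem_map]
    refine Filter.mem_of_superset (Filter.inter_mem hQ h) ?_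
    rintro x ⟨hxQ, hxB⟩
    exact mem_ballU.mpr ⟨x, hxQ, by rw [dist_comm]; exact hfd x hxB⟩

lemma pbreve_subset_sharp {p : Ultrafilter X} : pbreve p ⊆ sharp X := fun _ h => h.1

/-- The closure of `p̆` intersected with `X^#` is always invariant. -/
lemma invt_closure_pbreve (p : Ultrafilter X) :
    Invt (closure (pbreve p) ∩ sharp X) := by
  rintro u ⟨hu_cl, hu_sh⟩ v hv_sh hvu
  refine ⟨?_, hv_sh⟩
  rw [mem_closure_ultra]
  intro A hA
  obtain ⟨r, hr, hvu'⟩ := hvu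
  have huv : ∀ V ∈ v, ballU V r ∈ u := par_symm_rad hvu'
  have hBA : ballU A r ∈ u := huv A hA
  obtain ⟨q', hq'_pb, hq'_mem⟩ := mem_closure_ultra.mp hu_cl _ hBA
  obtain ⟨w, hwA, hwq'⟩ := exists_par_of_ballU_mem hq'_mem
  have hw_par : Par w p := par_trans ⟨r, hr, hwq'⟩ hq'_pb.2
  exact ⟨w, ⟨sharp_of_par ⟨r, hr, hwq'⟩ hq'_pb.1, hw_par⟩, hwA⟩

lemma self_mem_pbreve {p : Ultrafilter X} (hp : p ∈ sharp X) : p ∈ pbreve p :=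
  ⟨hp, par_refl p⟩

theorem stmt5 (hX : ¬ Bornology.IsBounded (Set.univ : Set X))
    (p : Ultrafilter X) (hp : p ∈ sharp X) :
    MinCI (closure (pbreve p) ∩ sharp X) ↔
      ∀ P ∈ p, ∃ r : ℝ, 0 ≤ r ∧ ∀ q ∈ pbreve p, ballU P r ∈ q := by
  have hMclosed : IsClosed (closure (pbreve p) ∩ sharp X) :=
    isClosed_closure.inter sharp_isClosed
  have hpM : p ∈ closure (pbreve p) ∩ sharp X :=
    ⟨subset_closure (self_mem_pbreve hp), hp⟩
  constructor
  · -- forward direction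
    rintro ⟨hMsub, hMne, hMcl, hMinv, hMmin⟩
    by_contra hcond
    push_neg at hcond
    obtain ⟨P, hP, hfail⟩ := hcond
    -- a directed family of nonempty closed sets
    set F : ℝ → Set (Ultrafilter X) := fun r =>
      closure (pbreve p ∩ {q : Ultrafilter X | (ballU P (max r 0))ᶜ ∈ q}) with hF
    have hFne : ∀ r, (F r).Nonempty := by
      intro r
      obtain ⟨q, hq_pb, hq_mem⟩ := hfail (max r 0) (le_max_right _ _)
      exact ⟨q, subset_closure ⟨hq_pb, Ultrafilter.compl_mem_iff_notMem.mpr hq_mem⟩⟩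
    have hFanti : ∀ {r s : ℝ}, r ≤ s → F s ⊆ F r := by
      intro r s hrs
      apply closure_mono
      rintro q ⟨hq1, hq2⟩
      refine ⟨hq1, ?_⟩
      exact Filter.mem_of_superset hq2
        (Set.compl_subset_compl.mpr (ballU_mono subset_rfl (max_le_max hrs le_rfl)))
    have hFdir : Directed (· ⊇ ·) F := fun r s =>
      ⟨max r s, hFanti (le_max_left _ _), hFanti (le_max_right _ _)⟩
    obtain ⟨qs, hqs⟩ := IsCompact.nonempty_iInter_of_directed_nonempty_isCompact_isClosed
      F hFdir hFne (fun r => (isClosed_closure).isCompact) (fun r => isClosed_closure)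
    simp only [Set.mem_iInter] at hqs
    -- qs ∈ M
    have hqs_cl : qs ∈ closure (pbreve p) := by
      have := hqs 0
      exact closure_mono Set.inter_subset_left this
    have hqs_sh : qs ∈ sharp X :=
      closure_minimal pbreve_subset_sharp sharp_isClosed hqs_cl
    have hqsM : qs ∈ closure (pbreve p) ∩ sharp X := ⟨hqs_cl, hqs_sh⟩
    -- qs avoids all the balls around P
    have hqs_avoid : ∀ r : ℝ, 0 ≤ r → (ballU P r)ᶜ ∈ qs := by
      intro r hr
      have h1 : qs ∈ closure {q : Ultrafilter X | (ballU P (max r 0))ᶜ ∈ q} :=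
        closure_mono Set.inter_subset_right (hqs r)
      rw [(ultrafilter_isClosed_basic _).closure_eq] at h1
      rwa [max_eq_left hr] at h1
    -- the smaller closed invariant set
    set S : Set (Ultrafilter X) := closure (pbreve qs) ∩ sharp X with hS
    have hSsubM : S ⊆ closure (pbreve p) ∩ sharp X := by
      have h1 : pbreve qs ⊆ closure (pbreve p) ∩ sharp X := by
        rintro v ⟨hv_sh, hv_par⟩
        exact hMinv qs hqsM v hv_sh hv_par
      intro v hv
      exact (closure_minimal h1 hMclosed) hv.1
    have hSeq : S = closure (pbreve p) ∩ sharp X :=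
      hMmin S hSsubM ⟨qs, subset_closure (self_mem_pbreve hqs_sh), hqs_sh⟩
        (isClosed_closure.inter sharp_isClosed) (invt_closure_pbreve qs)
    have hpS : p ∈ S := hSeq ▸ hpM
    obtain ⟨v, hv_pb, hv_P⟩ := mem_closure_ultra.mp hpS.1 P hP
    obtain ⟨s, hs, hv_par⟩ := hv_pb.2
    have : ballU P s ∈ qs := par_symm_rad hv_par P hv_P
    exact (Ultrafilter.compl_mem_iff_notMem.mp (hqs_avoid s hs)) this
  · -- backward direction
    intro hcond
    refine ⟨Set.inter_subset_right, ⟨p, hpM⟩, hMclosed, invt_closure_pbreve p, ?_⟩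
    intro S hSM hSne hScl hSinv
    obtain ⟨q, hqS⟩ := hSne
    have hq_sh : q ∈ sharp X := (hSM hqS).2
    -- Step A: every ball of the condition belongs to q
    have hA : ∀ P ∈ p, ∃ r : ℝ, 0 ≤ r ∧ ballU P r ∈ q := by
      intro P hP
      obtain ⟨r, hr, h⟩ := hcond P hP
      refine ⟨r, hr, ?_⟩
      by_contra hc
      have hC : (ballU P r)ᶜ ∈ q := Ultrafilter.compl_mem_iff_notMem.mpr hc
      obtain ⟨q', hq'_pb, hq'_mem⟩ := mem_closure_ultra.mp (hSM hqS).1 _ hC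
      exact (Ultrafilter.compl_mem_iff_notMem.mp hq'_mem) (h q' hq'_pb)
    -- Step B: p ∈ closure (pbreve q)
    have hB : p ∈ closure (pbreve q) := by
      rw [mem_closure_ultra]
      intro A hA'
      obtain ⟨r, hr, hBA⟩ := hA A hA'
      obtain ⟨v, hvA, hv_par⟩ := exists_par_of_ballU_mem hBA
      exact ⟨v, ⟨sharp_of_par ⟨r, hr, hv_par⟩ hq_sh, ⟨r, hr, hv_par⟩⟩, hvA⟩
    -- Step C: p ∈ S
    have hpbq : pbreve q ⊆ S := fun v hv => hSinv q hqS v hv.1 hv.2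
    have hpS : p ∈ S := closure_minimal hpbq hScl hB
    -- Step D: M ⊆ S
    have hpbp : pbreve p ⊆ S := fun v hv => hSinv p hpS v hv.1 hv.2
    exact Set.Subset.antisymm hSM
      (fun v hv => closure_minimal hpbp hScl hv.1)
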